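/- Let N₁ be a nonzero positive semi-definite Hermitian n×n matrix and N₃ a nonzero positive semi-definite Hermitian matrix with Ran(N₃) ⊆ Ran(N₁), with N₁ and N₃ linearly independent. Define λ̃ = inf{λ ∈ ℝ : λN₁ − N₃ is positive semi-definite}. Then λ̃ is a finite positive real number, λ̃N₁ − N₃ is positive semi-definite and nonzero, and Ran(N₃) is not contained in Ran(λ̃N₁ − N₃). -/

import Mathlib

open Matrix
open scoped ComplexOrder

section Helpers
variable {n : ℕ}

lemma quad_conj (M : Matrix (Fin n) (Fin n) ℂ) (hM : M.IsHermitian) (x : Fin n → ℂ) :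
    star (star x ⬝ᵥ M *ᵥ x) = star x ⬝ᵥ M *ᵥ x := by
  rw [← star_dotProduct, star_mulVec, dotProduct_mulVec, hM.eq]

lemma quad_im (M : Matrix (Fin n) (Fin n) ℂ) (hM : M.IsHermitian) (x : Fin n → ℂ) :
    (star x ⬝ᵥ M *ᵥ x).im = 0 := by
  have h := quad_conj M hM x
  have := congrArg Complex.im h
  simp only [Complex.star_def, Complex.conj_im] at this
  linarith

lemma posSemidef_of_re (M : Matrix (Fin n) (Fin n) ℂ) (hM : M.IsHermitian)
    (h : ∀ x : Fin n → ℂ, 0 ≤ (star x ⬝ᵥ M *ᵥ x).re) : M.PosSemidef := by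
  refine .of_dotProduct_mulVec_nonneg hM fun x => ?_
  rw [Complex.le_def]
  simp [quad_im M hM x, h x]

lemma quad_smul_sub_re (A B : Matrix (Fin n) (Fin n) ℂ) (l : ℝ) (x : Fin n → ℂ) :
    (star x ⬝ᵥ (l • A - B) *ᵥ x).re
      = l * (star x ⬝ᵥ A *ᵥ x).re - (star x ⬝ᵥ B *ᵥ x).re := by
  rw [sub_mulVec, dotProduct_sub]
  have : (l • A) *ᵥ x = l • (A *ᵥ x) := by
    ext i; simp [mulVec, dotProduct, Finset.mul_sum, mul_assoc]
  rw [this, dotProduct_smul]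
  simp [Complex.smul_re]

lemma star_dotProduct_self (z : Fin n → ℂ) :
    star z ⬝ᵥ z = ((∑ i, Complex.normSq (z i) : ℝ) : ℂ) := by
  simp [dotProduct, Complex.normSq_eq_conj_mul_self]

lemma sum_normSq_mulVec {U : Matrix (Fin n) (Fin n) ℂ} (hU : Uᴴ * U = 1) (z : Fin n → ℂ) :
    ∑ i, Complex.normSq ((U *ᵥ z) i) = ∑ i, Complex.normSq (z i) := by
  have h : star (U *ᵥ z) ⬝ᵥ (U *ᵥ z) = star z ⬝ᵥ z := by
    rw [star_mulVec, dotProduct_mulVec, vecMul_vecMul, hU, vecMul_one]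
  rw [star_dotProduct_self, star_dotProduct_self] at h
  exact_mod_cast h

lemma quad_eigen_expand (M : Matrix (Fin n) (Fin n) ℂ) (hM : M.IsHermitian) (x : Fin n → ℂ) :
    star x ⬝ᵥ M *ᵥ x
      = ((∑ i, hM.eigenvalues i *
          Complex.normSq ((star (hM.eigenvectorUnitary : Matrix (Fin n) (Fin n) ℂ) *ᵥ x) i) : ℝ) : ℂ) := by
  set U : Matrix (Fin n) (Fin n) ℂ := (hM.eigenvectorUnitary : Matrix (Fin n) (Fin n) ℂ) with hUdef
  set y := star U *ᵥ x with hy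
  conv_lhs => rw [hM.spectral_theorem, Unitary.conjStarAlgAut_apply]
  rw [← mulVec_mulVec, ← mulVec_mulVec]
  have h1 : star x ⬝ᵥ U *ᵥ (diagonal (RCLike.ofReal ∘ hM.eigenvalues) *ᵥ y)
      = star y ⬝ᵥ (diagonal (RCLike.ofReal ∘ hM.eigenvalues) *ᵥ y) := by
    rw [dotProduct_mulVec, hy, star_mulVec, star_eq_conjTranspose, conjTranspose_conjTranspose]
  rw [h1]
  simp only [dotProduct, mulVec_diagonal, Function.comp]
  push_cast
  refine Finset.sum_congr rfl fun i _ => ?_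
  have : star y i = (starRingEnd ℂ) (y i) := rfl
  rw [this, Complex.normSq_eq_conj_mul_self, mul_left_comm]
  norm_num

lemma isHermitian_smul_sub {A B : Matrix (Fin n) (Fin n) ℂ} (hA : A.IsHermitian)
    (hB : B.IsHermitian) (l : ℝ) : (l • A - B).IsHermitian := by
  unfold Matrix.IsHermitian
  rw [conjTranspose_sub, conjTranspose_smul, hA.eq, hB.eq, star_trivial]

lemma quad_le_sum_eigen {B : Matrix (Fin n) (Fin n) ℂ} (hB : B.PosSemidef) (x : Fin n → ℂ) :
    (star x ⬝ᵥ B *ᵥ x).re ≤ (∑ j, hB.1.eigenvalues j) * ∑ i, Complex.normSq (x i) := by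
  have h := quad_eigen_expand B hB.1 x
  have hre : (star x ⬝ᵥ B *ᵥ x).re
      = ∑ i, hB.1.eigenvalues i *
          Complex.normSq ((star (hB.1.eigenvectorUnitary : Matrix (Fin n) (Fin n) ℂ) *ᵥ x) i) := by
    rw [h, Complex.ofReal_re]
  set U : Matrix (Fin n) (Fin n) ℂ := (hB.1.eigenvectorUnitary : Matrix (Fin n) (Fin n) ℂ) with hU
  set y := star U *ᵥ x with hy
  have hUU : (star U)ᴴ * (star U) = 1 := by
    rw [star_eq_conjTranspose, conjTranspose_conjTranspose]
    exact (Unitary.mem_iff.mp hB.1.eigenvectorUnitary.prop).2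
  have hnorm : ∑ i, Complex.normSq (y i) ≤ ∑ i, Complex.normSq (x i) := by
    rw [hy]
    exact le_of_eq (sum_normSq_mulVec hUU x)
  rw [hre]
  calc ∑ i, hB.1.eigenvalues i * Complex.normSq (y i)
      ≤ ∑ i, hB.1.eigenvalues i * ∑ j, Complex.normSq (y j) := by
        refine Finset.sum_le_sum fun i _ => ?_
        refine mul_le_mul_of_nonneg_left ?_ (hB.eigenvalues_nonneg i)
        exact Finset.single_le_sum (fun j _ => Complex.normSq_nonneg _) (Finset.mem_univ i)
    _ = (∑ j, hB.1.eigenvalues j) * ∑ i, Complex.normSq (y i) := by rw [← Finset.sum_mul]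
    _ ≤ (∑ j, hB.1.eigenvalues j) * ∑ i, Complex.normSq (x i) := by
        refine mul_le_mul_of_nonneg_left hnorm ?_
        exact Finset.sum_nonneg fun j _ => hB.eigenvalues_nonneg j

lemma exists_smul_sub_posSemidef (A B : Matrix (Fin n) (Fin n) ℂ)
    (hA : A.PosSemidef) (hB : B.PosSemidef) (hA0 : A ≠ 0)
    (hker : ∀ x, A *ᵥ x = 0 → B *ᵥ x = 0) :
    ∃ c : ℝ, 0 < c ∧ (c • A - B).PosSemidef := by
  classical
  set U : Matrix (Fin n) (Fin n) ℂ := (hA.1.eigenvectorUnitary : Matrix (Fin n) (Fin n) ℂ) with hU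
  set ev := hA.1.eigenvalues with hev
  have hevnn : ∀ i, 0 ≤ ev i := hA.eigenvalues_nonneg
  have hUU : star U * U = 1 := (Unitary.mem_iff.mp hA.1.eigenvectorUnitary.prop).1
  have hUU' : U * star U = 1 := (Unitary.mem_iff.mp hA.1.eigenvectorUnitary.prop).2
  -- some eigenvalue is nonzero
  have hne : ∃ i, ev i ≠ 0 := by
    by_contra hcon
    push_neg at hcon
    apply hA0
    have : diagonal (RCLike.ofReal ∘ ev : Fin n → ℂ) = 0 := by
      ext i j
      by_cases h : i = j <;> simp [diagonal, h, hcon]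
    rw [hA.1.spectral_theorem, Unitary.conjStarAlgAut_apply, ← hev, ← hU, this, Matrix.mul_zero, Matrix.zero_mul]
  set s : Finset (Fin n) := Finset.univ.filter (fun i => ev i ≠ 0) with hs
  have hsne : s.Nonempty := by
    obtain ⟨i, hi⟩ := hne
    exact ⟨i, by simp [hs, hi]⟩
  set m := s.inf' hsne ev with hm
  have hm0 : 0 < m := by
    rw [hm, Finset.lt_inf'_iff]
    intro i hi
    have : ev i ≠ 0 := by simpa [hs] using hi
    exact lt_of_le_of_ne (hevnn i) (Ne.symm this)
  have hmle : ∀ i, ev i ≠ 0 → m ≤ ev i := fun i hi =>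
    Finset.inf'_le _ (by simp [hs, hi])
  set K := ∑ j, hB.1.eigenvalues j with hK
  have hK0 : 0 ≤ K := Finset.sum_nonneg fun j _ => hB.eigenvalues_nonneg j
  refine ⟨(K + 1) / m, by positivity, ?_⟩
  apply posSemidef_of_re _ (isHermitian_smul_sub hA.1 hB.1 _)
  intro x
  rw [quad_smul_sub_re]
  -- set up the projection
  set y := star U *ᵥ x with hy
  set z : Fin n → ℂ := fun i => if ev i = 0 then 0 else y i with hz
  set Px := U *ᵥ z with hPx
  set w := x - Px with hw
  have hAw : A *ᵥ w = 0 := by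
    have h1 : star U *ᵥ w = y - z := by
      rw [hw, mulVec_sub, hPx, mulVec_mulVec, hUU, one_mulVec, ← hy]
    have h2 : diagonal (RCLike.ofReal ∘ ev : Fin n → ℂ) *ᵥ (y - z) = 0 := by
      ext i
      rw [mulVec_diagonal]
      by_cases h : ev i = 0 <;> simp [hz, h, Function.comp]
    conv_lhs => rw [hA.1.spectral_theorem, Unitary.conjStarAlgAut_apply, ← hev, ← hU]
    rw [← mulVec_mulVec, ← mulVec_mulVec, h1, h2, mulVec_zero]
  have hBw : B *ᵥ w = 0 := hker w hAw
  have hxsum : x = Px + w := by rw [hw]; ring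
  have hBx : B *ᵥ x = B *ᵥ Px := by
    conv_lhs => rw [hxsum]
    rw [mulVec_add, hBw, add_zero]
  have hqBeq : star x ⬝ᵥ B *ᵥ x = star Px ⬝ᵥ B *ᵥ Px := by
    rw [hBx]
    conv_lhs => rw [hxsum]
    have hwB : star w ⬝ᵥ B *ᵥ Px = 0 := by
      rw [dotProduct_mulVec]
      have : star w ᵥ* B = 0 := by
        rw [← hB.1.eq, ← star_mulVec, hBw, star_zero]
      rw [this, zero_dotProduct]
    rw [star_add, add_dotProduct, hwB, add_zero]
  -- bound qB
  have hqB : (star x ⬝ᵥ B *ᵥ x).re ≤ K * ∑ i, Complex.normSq (z i) := by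
    rw [hqBeq]
    calc (star Px ⬝ᵥ B *ᵥ Px).re ≤ K * ∑ i, Complex.normSq (Px i) := quad_le_sum_eigen hB Px
      _ = K * ∑ i, Complex.normSq (z i) := by
          rw [hPx, sum_normSq_mulVec (by rw [← star_eq_conjTranspose]; exact hUU) z]
  -- qA expansion
  have hqA : (star x ⬝ᵥ A *ᵥ x).re = ∑ i, ev i * Complex.normSq (y i) := by
    rw [quad_eigen_expand A hA.1 x, Complex.ofReal_re]
  have hSz : m * (∑ i, Complex.normSq (z i)) ≤ ∑ i, ev i * Complex.normSq (y i) := by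
    rw [Finset.mul_sum]
    refine Finset.sum_le_sum fun i _ => ?_
    by_cases h : ev i = 0
    · simp [hz, h]
    · rw [hz]
      simp only [h, if_false]
      exact mul_le_mul_of_nonneg_right (hmle i h) (Complex.normSq_nonneg _)
  have hSz0 : 0 ≤ ∑ i, Complex.normSq (z i) :=
    Finset.sum_nonneg fun i _ => Complex.normSq_nonneg _
  have hc : (K + 1) / m * m = K + 1 := div_mul_cancel₀ _ (ne_of_gt hm0)
  rw [hqA]
  set qA := ∑ i, ev i * Complex.normSq (y i) with hqAdef
  set Sz := ∑ i, Complex.normSq (z i) with hSzdef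
  have hqAnn : 0 ≤ qA := Finset.sum_nonneg fun i _ =>
    mul_nonneg (hevnn i) (Complex.normSq_nonneg _)
  have hcpos : 0 < (K + 1) / m := by positivity
  nlinarith [mul_le_mul_of_nonneg_left hSz (le_of_lt hcpos)]

lemma quad_re_nonneg {M : Matrix (Fin n) (Fin n) ℂ} (hM : M.PosSemidef) (x : Fin n → ℂ) :
    0 ≤ (star x ⬝ᵥ M *ᵥ x).re := by
  have := hM.dotProduct_mulVec_nonneg x
  rw [Complex.le_def] at this
  simpa using this.1

lemma ker_of_range_le {A B : Matrix (Fin n) (Fin n) ℂ} (hA : A.PosSemidef) (hB : B.PosSemidef)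
    (hran : LinearMap.range B.mulVecLin ≤ LinearMap.range A.mulVecLin) :
    ∀ x, A *ᵥ x = 0 → B *ᵥ x = 0 := by
  intro x hx
  have hmem : B *ᵥ x ∈ LinearMap.range A.mulVecLin := hran ⟨x, by simp [mulVecLin_apply]⟩
  obtain ⟨w, hw⟩ := hmem
  rw [mulVecLin_apply] at hw
  have hq : star x ⬝ᵥ B *ᵥ x = 0 := by
    rw [← hw, dotProduct_mulVec]
    have : star x ᵥ* A = 0 := by
      rw [← hA.1.eq, ← star_mulVec, hx, star_zero]
    rw [this, zero_dotProduct]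
  exact (hB.dotProduct_mulVec_zero_iff x).mp hq

lemma exists_pos_quad {B : Matrix (Fin n) (Fin n) ℂ} (hB : B.PosSemidef) (h0 : B ≠ 0) :
    ∃ x, 0 < (star x ⬝ᵥ B *ᵥ x).re := by
  have : ∃ x, B *ᵥ x ≠ 0 := by
    by_contra hcon
    push_neg at hcon
    apply h0
    ext i j
    have := congrFun (hcon (Pi.single j 1)) i
    simpa [mulVec_single] using this
  obtain ⟨x, hx⟩ := this
  refine ⟨x, ?_⟩
  have hne : star x ⬝ᵥ B *ᵥ x ≠ 0 := fun h => hx ((hB.dotProduct_mulVec_zero_iff x).mp h)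
  have hlt : (0 : ℂ) < star x ⬝ᵥ B *ᵥ x := lt_of_le_of_ne (hB.dotProduct_mulVec_nonneg x) (Ne.symm hne)
  rw [Complex.lt_def] at hlt
  simpa using hlt.1

lemma posSemidef_real_smul {M : Matrix (Fin n) (Fin n) ℂ} (hM : M.PosSemidef) {c : ℝ}
    (hc : 0 ≤ c) : (c • M).PosSemidef := by
  have h : (c • M - 0).PosSemidef := by
    apply posSemidef_of_re _ (isHermitian_smul_sub hM.1 isHermitian_zero c)
    intro x
    rw [quad_smul_sub_re]
    simp only [zero_mulVec, dotProduct_zero, Complex.zero_re, sub_zero]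
    exact mul_nonneg hc (quad_re_nonneg hM x)
  simpa using h

end Helpers

/-- A step in the proof of Lemma 4.4: for nonzero PSD matrices `N₁`, `N₃` with
`Ran(N₃) ⊆ Ran(N₁)` and `N₁, N₃` linearly independent over ℝ, the number
`λ̃ = inf {λ : λN₁ − N₃ is PSD}` is finite and positive, `λ̃N₁ − N₃` is PSD
and nonzero, and `Ran(N₃)` is not contained in `Ran(λ̃N₁ − N₃)`. -/
theorem inf_psd_scaling {n : ℕ} (N₁ N₃ : Matrix (Fin n) (Fin n) ℂ)
    (h₁ : N₁.PosSemidef) (h₃ : N₃.PosSemidef) (h₁0 : N₁ ≠ 0) (h₃0 : N₃ ≠ 0)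
    (hran : LinearMap.range N₃.mulVecLin ≤ LinearMap.range N₁.mulVecLin)
    (hli : LinearIndependent ℝ ![N₁, N₃]) :
    0 < sInf {l : ℝ | (l • N₁ - N₃).PosSemidef} ∧
    ((sInf {l : ℝ | (l • N₁ - N₃).PosSemidef}) • N₁ - N₃).PosSemidef ∧
    (sInf {l : ℝ | (l • N₁ - N₃).PosSemidef}) • N₁ - N₃ ≠ 0 ∧
    ¬ (LinearMap.range N₃.mulVecLin ≤
        LinearMap.range ((sInf {l : ℝ | (l • N₁ - N₃).PosSemidef}) • N₁
          - N₃).mulVecLin) := by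
  set S := {l : ℝ | (l • N₁ - N₃).PosSemidef} with hSdef
  have hker₁ := ker_of_range_le h₁ h₃ hran
  obtain ⟨c, hc0, hcS⟩ := exists_smul_sub_posSemidef N₁ N₃ h₁ h₃ h₁0 hker₁
  have hSne : S.Nonempty := ⟨c, hcS⟩
  obtain ⟨x₀, hb⟩ := exists_pos_quad h₃ h₃0
  set a := (star x₀ ⬝ᵥ N₁ *ᵥ x₀).re with ha_def
  set b := (star x₀ ⬝ᵥ N₃ *ᵥ x₀).re with hb_def
  have ha0 : 0 ≤ a := quad_re_nonneg h₁ x₀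
  have hmem : ∀ l ∈ S, b ≤ l * a := by
    intro l hl
    have h := quad_re_nonneg hl x₀
    rw [quad_smul_sub_re] at h
    linarith
  have ha : 0 < a := by nlinarith [hmem c hcS]
  have hbdd : BddBelow S := ⟨b / a, fun l hl => (div_le_iff₀ ha).mpr (hmem l hl)⟩
  have hinfpos : 0 < sInf S :=
    lt_of_lt_of_le (div_pos hb ha) (le_csInf hSne fun l hl => (div_le_iff₀ ha).mpr (hmem l hl))
  set lam := sInf S with hlam
  have hlamS : (lam • N₁ - N₃).PosSemidef := by
    apply posSemidef_of_re _ (isHermitian_smul_sub h₁.1 h₃.1 _)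
    intro x
    rw [quad_smul_sub_re]
    set ax := (star x ⬝ᵥ N₁ *ᵥ x).re with hax_def
    set bx := (star x ⬝ᵥ N₃ *ᵥ x).re with hbx_def
    have hax : 0 ≤ ax := quad_re_nonneg h₁ x
    have hlx : ∀ l ∈ S, bx ≤ l * ax := by
      intro l hl
      have h := quad_re_nonneg hl x
      rw [quad_smul_sub_re] at h
      linarith
    by_cases h : ax = 0
    · have := hlx c hcS
      rw [h] at this ⊢
      simp at this ⊢
      linarith
    · have hax' : 0 < ax := lt_of_le_of_ne hax (Ne.symm h)
      have h1 : bx / ax ≤ lam := le_csInf hSne fun l hl => (div_le_iff₀ hax').mpr (hlx l hl)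
      have h2 : bx ≤ lam * ax := by
        rw [← div_le_iff₀ hax'] at *
        exact h1
      linarith
  have hne0 : lam • N₁ - N₃ ≠ 0 := by
    intro h
    have heq : lam • N₁ = N₃ := by rwa [sub_eq_zero] at h
    rw [linearIndependent_fin2] at hli
    obtain ⟨-, h2'⟩ := hli
    apply h2' (1 / lam)
    simp only [Matrix.cons_val_one, Matrix.head_cons, Matrix.cons_val_zero]
    rw [← heq, smul_smul, one_div_mul_cancel (ne_of_gt hinfpos), one_smul]
  refine ⟨hinfpos, hlamS, hne0, ?_⟩
  intro hle
  have hkerM := ker_of_range_le hlamS h₃ hle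
  obtain ⟨μ, hμ0, hμ⟩ := exists_smul_sub_posSemidef _ N₃ hlamS h₃ hne0 hkerM
  have hμ1 : (0:ℝ) < μ + 1 := by linarith
  have heq : (μ * lam / (μ + 1)) • N₁ - N₃ = (1 / (μ + 1)) • (μ • (lam • N₁ - N₃) - N₃) := by
    have h : (μ + 1) ≠ 0 := ne_of_gt hμ1
    match_scalars <;> field_simp <;> ring
  have hS' : (μ * lam / (μ + 1)) ∈ S := by
    rw [hSdef, Set.mem_setOf_eq, heq]
    exact posSemidef_real_smul hμ (by positivity)
  have hle' : lam ≤ μ * lam / (μ + 1) := csInf_le hbdd hS'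
  rw [le_div_iff₀ hμ1] at hle'
  nlinarith [hinfpos]
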